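/- Let k ≥ 2 and define recursively F_{2,1} = P^- D^{-1} L_k and F_{2,i+1} = P^- D^{-1} P^+ D^{-1} F_{2,i}. Then for all 1 ≤ i ≤ ⌈k/2⌉ there exist real constants b_{i,m} such that F_{2,i} = Σ_{m=k-2i+2}^{k} b_{i,m} (L_m - L_{m-1}); in particular F_{2,i}(1) = 0. -/
import Mathlib


open Polynomial Finset

/-- Legendre polynomial of degree `m` on `[-1,1]`, normalized so `L_m(1) = 1`. -/
noncomputable def leg (m : ℕ) : Polynomial ℝ :=
  Polynomial.C (((2 : ℝ) ^ m * Nat.factorial m)⁻¹) *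
    (fun p => Polynomial.derivative p)^[m] ((Polynomial.X ^ 2 - 1) ^ m)

/-- The antiderivative operator `D⁻¹ v (s) = ∫_{-1}^s v`. -/
noncomputable def Dinv (v : ℝ → ℝ) (s : ℝ) : ℝ := ∫ t in (-1 : ℝ)..s, v t

/-- Degree-`k` right Gauss–Radau projection on `[-1,1]`. -/
def IsRadauNeg (k : ℕ) (v : ℝ → ℝ) (p : Polynomial ℝ) : Prop :=
  p.natDegree ≤ k ∧
  (∀ w : Polynomial ℝ, w.natDegree + 1 ≤ k →
    ∫ s in (-1 : ℝ)..1, (v s - p.eval s) * w.eval s = 0) ∧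
  p.eval 1 = v 1

/-- Degree-`k` left Gauss–Radau projection on `[-1,1]`. -/
def IsRadauPos (k : ℕ) (v : ℝ → ℝ) (p : Polynomial ℝ) : Prop :=
  p.natDegree ≤ k ∧
  (∀ w : Polynomial ℝ, w.natDegree + 1 ≤ k →
    ∫ s in (-1 : ℝ)..1, (v s - p.eval s) * w.eval s = 0) ∧
  p.eval (-1) = v (-1)

/-! ### Auxiliary polynomial calculus -/

noncomputable def aint (p : Polynomial ℝ) : Polynomial ℝ :=
  ∑ n ∈ Finset.range (p.natDegree + 1),
    Polynomial.C (p.coeff n / ((n : ℝ) + 1)) * Polynomial.X ^ (n + 1)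

lemma derivative_aint (p : Polynomial ℝ) : Polynomial.derivative (aint p) = p := by
  unfold aint
  rw [derivative_sum]
  conv_rhs => rw [p.as_sum_range' (p.natDegree + 1) (lt_add_one _)]
  refine Finset.sum_congr rfl fun n _ => ?_
  rw [derivative_C_mul, derivative_X_pow, Nat.add_sub_cancel, ← mul_assoc, ← C_mul,
    ← C_mul_X_pow_eq_monomial]
  congr 2
  push_cast
  rw [div_mul_cancel₀]
  positivity

noncomputable def dint (p : Polynomial ℝ) : Polynomial ℝ :=
  aint p - Polynomial.C ((aint p).eval (-1))

lemma derivative_dint (p : Polynomial ℝ) : Polynomial.derivative (dint p) = p := by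
  rw [dint, derivative_sub, derivative_C, sub_zero, derivative_aint]

lemma dint_eval_neg_one (p : Polynomial ℝ) : (dint p).eval (-1) = 0 := by
  simp [dint]

lemma natDegree_dint_le (p : Polynomial ℝ) : (dint p).natDegree ≤ p.natDegree + 1 := by
  refine le_trans (natDegree_sub_le _ _) (max_le ?_ (le_trans (natDegree_C _).le (by omega)))
  refine natDegree_sum_le_of_forall_le _ _ fun n hn => ?_
  refine le_trans (natDegree_C_mul_le _ _) ?_
  simp only [Finset.mem_range] at hn
  simpa [natDegree_X_pow] using by omega

lemma integral_deriv (P : Polynomial ℝ) (a b : ℝ) :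
    ∫ t in a..b, (Polynomial.derivative P).eval t = P.eval b - P.eval a := by
  refine intervalIntegral.integral_eq_sub_of_hasDerivAt (fun x _ => P.hasDerivAt x) ?_
  exact (Polynomial.continuous _).intervalIntegrable _ _

lemma integral_eval (p : Polynomial ℝ) (a b : ℝ) :
    ∫ t in a..b, p.eval t = (dint p).eval b - (dint p).eval a := by
  rw [← integral_deriv (dint p) a b, derivative_dint]

lemma Dinv_eval (p : Polynomial ℝ) (s : ℝ) :
    Dinv (fun t => p.eval t) s = (dint p).eval s := by
  rw [Dinv, integral_eval, dint_eval_neg_one, sub_zero]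

lemma pii (p q : Polynomial ℝ) (a b : ℝ) :
    IntervalIntegrable (fun s => p.eval s * q.eval s) MeasureTheory.volume a b :=
  ((Polynomial.continuous p).mul (Polynomial.continuous q)).intervalIntegrable _ _

lemma ibp (P Q : Polynomial ℝ) :
    ∫ s in (-1:ℝ)..1, (Polynomial.derivative P).eval s * Q.eval s
      = P.eval 1 * Q.eval 1 - P.eval (-1) * Q.eval (-1)
        - ∫ s in (-1:ℝ)..1, P.eval s * (Polynomial.derivative Q).eval s := by
  have h := integral_deriv (P * Q) (-1) 1
  rw [derivative_mul] at h
  rw [intervalIntegral.integral_congr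
    (g := fun s => (Polynomial.derivative P).eval s * Q.eval s
      + P.eval s * (Polynomial.derivative Q).eval s) (fun s _ => by simp)] at h
  rw [intervalIntegral.integral_add (pii _ _ _ _) (pii _ _ _ _)] at h
  simp only [Polynomial.eval_mul] at h
  linarith

/-- Orthogonality to all polynomials of degree `< c`. -/
def Orth (c : ℕ) (p : Polynomial ℝ) : Prop :=
  ∀ w : Polynomial ℝ, w.natDegree + 1 ≤ c → ∫ s in (-1:ℝ)..1, p.eval s * w.eval s = 0

lemma orth_mono {c c' : ℕ} {p : Polynomial ℝ} (h : c' ≤ c) (hp : Orth c p) : Orth c' p :=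
  fun w hw => hp w (le_trans hw h)

lemma dint_eval_one {p : Polynomial ℝ} {c : ℕ} (hc : 1 ≤ c) (h : Orth c p) :
    (dint p).eval 1 = 0 := by
  have h1 := h 1 (by simpa using hc)
  simp only [Polynomial.eval_one, mul_one] at h1
  have h2 := integral_eval p (-1) 1
  rw [h1, dint_eval_neg_one, sub_zero] at h2
  exact h2.symm

lemma orth_dint {p : Polynomial ℝ} {c : ℕ} (hc : 1 ≤ c) (h : Orth c p) :
    Orth (c - 1) (dint p) := by
  intro w hw
  have hWd : (dint w).natDegree + 1 ≤ c := by
    have := natDegree_dint_le w; omega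
  have h2 := ibp (dint p) (dint w)
  simp only [derivative_dint] at h2
  rw [dint_eval_one hc h, dint_eval_neg_one, h (dint w) hWd] at h2
  linarith

lemma radau_orth {k c : ℕ} {v p : Polynomial ℝ} (hv : Orth c v)
    (horth : ∀ w : Polynomial ℝ, w.natDegree + 1 ≤ k →
      ∫ s in (-1:ℝ)..1, (v.eval s - p.eval s) * w.eval s = 0) :
    Orth (min c k) p := by
  intro w hw
  have h1 := hv w (le_trans hw (min_le_left _ _))
  have h2 := horth w (le_trans hw (min_le_right _ _))
  rw [intervalIntegral.integral_congr
    (g := fun s => v.eval s * w.eval s - p.eval s * w.eval s) (fun s _ => by ring)] at h2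
  rw [intervalIntegral.integral_sub (pii _ _ _ _) (pii _ _ _ _), h1] at h2
  linarith

lemma radauNeg_poly {k : ℕ} {p q : Polynomial ℝ}
    (h : IsRadauNeg k (Dinv fun t => p.eval t) q) :
    q.natDegree ≤ k ∧
    (∀ w : Polynomial ℝ, w.natDegree + 1 ≤ k →
      ∫ s in (-1:ℝ)..1, ((dint p).eval s - q.eval s) * w.eval s = 0) ∧
    q.eval 1 = (dint p).eval 1 := by
  obtain ⟨h1, h2, h3⟩ := h
  refine ⟨h1, fun w hw => ?_, by rw [h3, Dinv_eval]⟩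
  rw [← h2 w hw]
  exact intervalIntegral.integral_congr (fun s _ => by rw [Dinv_eval])

lemma radauPos_poly {k : ℕ} {p q : Polynomial ℝ}
    (h : IsRadauPos k (Dinv fun t => p.eval t) q) :
    q.natDegree ≤ k ∧
    (∀ w : Polynomial ℝ, w.natDegree + 1 ≤ k →
      ∫ s in (-1:ℝ)..1, ((dint p).eval s - q.eval s) * w.eval s = 0) := by
  obtain ⟨h1, h2, h3⟩ := h
  refine ⟨h1, fun w hw => ?_⟩
  rw [← h2 w hw]
  exact intervalIntegral.integral_congr (fun s _ => by rw [Dinv_eval])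

/-! ### Legendre polynomial facts -/

noncomputable def Rm (m : ℕ) : Polynomial ℝ := ((Polynomial.X : Polynomial ℝ) ^ 2 - 1) ^ m

lemma leg_eq (m : ℕ) :
    leg m = Polynomial.C (((2 : ℝ) ^ m * Nat.factorial m)⁻¹) *
      Polynomial.derivative^[m] (Rm m) := rfl

lemma Rm_eq (m : ℕ) :
    Rm m = (Polynomial.X - Polynomial.C (1:ℝ)) ^ m * (Polynomial.X - Polynomial.C (-1:ℝ)) ^ m := by
  rw [Rm, ← mul_pow]
  congr 1
  simp only [map_one, map_neg]
  ring

lemma Rm_deriv_boundary {m j : ℕ} (hj : j < m) :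
    (Polynomial.derivative^[j] (Rm m)).eval 1 = 0 ∧
    (Polynomial.derivative^[j] (Rm m)).eval (-1) = 0 := by
  rw [Rm_eq, Polynomial.iterate_derivative_mul]
  constructor <;>
  · rw [Polynomial.eval_finset_sum]
    apply Finset.sum_eq_zero
    intro i hi
    simp only [Finset.mem_range] at hi
    rw [Polynomial.iterate_derivative_X_sub_pow, Polynomial.iterate_derivative_X_sub_pow]
    have h1 : m - (j - i) ≠ 0 := by omega
    have h2 : m - i ≠ 0 := by omega
    simp [zero_pow, h1, h2]

lemma Rm_deriv_m_eval_one (m : ℕ) :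
    (Polynomial.derivative^[m] (Rm m)).eval 1 = (2:ℝ)^m * Nat.factorial m := by
  rw [Rm_eq, Polynomial.iterate_derivative_mul, Polynomial.eval_finset_sum]
  rw [Finset.sum_eq_single 0]
  · rw [Nat.choose_zero_right, one_smul, Nat.sub_zero, Function.iterate_zero_apply,
      Polynomial.iterate_derivative_X_sub_pow_self, Polynomial.eval_mul]
    simp
    ring
  · intro i hi hne
    simp only [Finset.mem_range] at hi
    rw [Polynomial.iterate_derivative_X_sub_pow]
    have h1 : m - (m - i) = i := by omega
    simp [h1, zero_pow, hne]
  · simp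

lemma two_pow_fact_ne (m : ℕ) : ((2:ℝ)^m * Nat.factorial m) ≠ 0 := by
  have := Nat.factorial_pos m
  positivity

lemma leg_eval_one (m : ℕ) : (leg m).eval 1 = 1 := by
  rw [leg_eq, Polynomial.eval_mul, Polynomial.eval_C, Rm_deriv_m_eval_one,
    inv_mul_cancel₀ (two_pow_fact_ne m)]

lemma Rm_natDegree (m : ℕ) : (Rm m).natDegree = 2 * m := by
  rw [Rm]
  have h : ((Polynomial.X : Polynomial ℝ) ^ 2 - 1) = Polynomial.X ^ 2 - Polynomial.C 1 := by
    rw [map_one]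
  rw [h, Polynomial.natDegree_pow, Polynomial.natDegree_X_pow_sub_C]
  ring

lemma Rm_monic (m : ℕ) : (Rm m).Monic := by
  rw [Rm]
  have h : ((Polynomial.X : Polynomial ℝ) ^ 2 - 1) = Polynomial.X ^ 2 - Polynomial.C 1 := by
    rw [map_one]
  rw [h]
  exact (monic_X_pow_sub_C (1:ℝ) (by norm_num : (2:ℕ) ≠ 0)).pow m

lemma legR_coeff (m : ℕ) :
    (Polynomial.derivative^[m] (Rm m)).coeff m = ((2*m).descFactorial m : ℝ) := by
  rw [Polynomial.coeff_iterate_derivative]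
  have h : m + m = 2 * m := by ring
  rw [h]
  have hc : (Rm m).coeff (2 * m) = 1 := by
    have := (Rm_monic m).leadingCoeff
    rwa [Polynomial.leadingCoeff, Rm_natDegree] at this
  rw [hc]
  simp

lemma legR_natDegree_le (m : ℕ) : (Polynomial.derivative^[m] (Rm m)).natDegree ≤ m := by
  have := Polynomial.natDegree_iterate_derivative (Rm m) m
  rwa [Rm_natDegree, show 2 * m - m = m by omega] at this

lemma leg_coeff_ne (m : ℕ) : (leg m).coeff m ≠ 0 := by
  rw [leg_eq, Polynomial.coeff_C_mul, legR_coeff]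
  have h1 : (0:ℕ) < (2*m).descFactorial m := by
    rw [Nat.descFactorial_eq_factorial_mul_choose]
    exact Nat.mul_pos m.factorial_pos (Nat.choose_pos (by omega))
  have h2 : ((2:ℝ)^m * Nat.factorial m)⁻¹ ≠ 0 := inv_ne_zero (two_pow_fact_ne m)
  positivity

lemma leg_natDegree (m : ℕ) : (leg m).natDegree = m := by
  refine le_antisymm ?_ (Polynomial.le_natDegree_of_ne_zero (leg_coeff_ne m))
  rw [leg_eq]
  exact le_trans (natDegree_C_mul_le _ _) (legR_natDegree_le m)

lemma leg_ne_zero (m : ℕ) : leg m ≠ 0 := fun h => leg_coeff_ne m (by simp [h])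

lemma ibp' (P Q : Polynomial ℝ) :
    ∫ s in (-1:ℝ)..1, P.eval s * (Polynomial.derivative Q).eval s
      = P.eval 1 * Q.eval 1 - P.eval (-1) * Q.eval (-1)
        - ∫ s in (-1:ℝ)..1, (Polynomial.derivative P).eval s * Q.eval s := by
  have := ibp P Q
  linarith

lemma Rm_orth (m : ℕ) (w : Polynomial ℝ) (hw : w.natDegree < m) :
    ∫ s in (-1:ℝ)..1, (Polynomial.derivative^[m] (Rm m)).eval s * w.eval s = 0 := by
  have key : ∀ n, n ≤ m →
      ∫ s in (-1:ℝ)..1, (Polynomial.derivative^[n] (Rm m)).eval s *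
        (Polynomial.derivative^[m - n] w).eval s = 0 := by
    intro n
    induction n with
    | zero =>
      intro _
      rw [Nat.sub_zero, Polynomial.iterate_derivative_eq_zero hw]
      simp
    | succ n ih =>
      intro hn
      obtain ⟨hb1, hb2⟩ := Rm_deriv_boundary (show n < m by omega)
      rw [Function.iterate_succ_apply' Polynomial.derivative n (Rm m)]
      have hQ : Polynomial.derivative (Polynomial.derivative^[m - (n+1)] w)
          = Polynomial.derivative^[m - n] w := by
        rw [← Function.iterate_succ_apply' Polynomial.derivative (m - (n+1)) w]
        congr 1
        omega
      rw [ibp]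
      rw [hb1, hb2, hQ, ih (by omega)]
      ring
  have h := key m le_rfl
  rwa [Nat.sub_self, Function.iterate_zero_apply] at h

lemma leg_orth (m : ℕ) (w : Polynomial ℝ) (hw : w.natDegree < m) :
    ∫ s in (-1:ℝ)..1, (leg m).eval s * w.eval s = 0 := by
  have h : ∀ s : ℝ, (leg m).eval s * w.eval s
      = ((2:ℝ)^m * Nat.factorial m)⁻¹ *
        ((Polynomial.derivative^[m] (Rm m)).eval s * w.eval s) := by
    intro s
    rw [leg_eq]
    simp only [Polynomial.eval_mul, Polynomial.eval_C]
    ring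
  rw [intervalIntegral.integral_congr (fun s _ => h s),
    intervalIntegral.integral_const_mul, Rm_orth m w hw, mul_zero]

lemma leg_leg_orth {a b : ℕ} (h : a ≠ b) :
    ∫ s in (-1:ℝ)..1, (leg a).eval s * (leg b).eval s = 0 := by
  rcases Nat.lt_or_ge b a with hlt | hge
  · exact leg_orth a (leg b) (by rw [leg_natDegree]; omega)
  · have hlt : a < b := by omega
    rw [intervalIntegral.integral_congr
      (g := fun s => (leg b).eval s * (leg a).eval s) (fun s _ => by ring)]
    exact leg_orth b (leg a) (by rw [leg_natDegree]; omega)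

lemma leg_sq_pos (m : ℕ) : 0 < ∫ s in (-1:ℝ)..1, (leg m).eval s * (leg m).eval s := by
  rw [intervalIntegral.integral_pos_iff_support_of_nonneg_ae
    (Filter.Eventually.of_forall (fun s => mul_self_nonneg _)) (pii _ _ _ _)]
  refine ⟨by norm_num, ?_⟩
  have hfin : {x : ℝ | (leg m).IsRoot x}.Finite := Polynomial.finite_setOf_isRoot (leg_ne_zero m)
  have h0 : MeasureTheory.volume {x : ℝ | (leg m).IsRoot x} = 0 := hfin.measure_zero _
  have hsub : Set.Ioc (-1:ℝ) 1 \ {x : ℝ | (leg m).IsRoot x} ⊆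
      (Function.support fun s => (leg m).eval s * (leg m).eval s) ∩ Set.Ioc (-1) 1 := by
    intro x hx
    refine ⟨mul_ne_zero hx.2 hx.2, hx.1⟩
  refine lt_of_lt_of_le ?_ (MeasureTheory.measure_mono hsub)
  rw [MeasureTheory.measure_diff_null h0, Real.volume_Ioc]
  norm_num

lemma leg_span : ∀ n (p : Polynomial ℝ), p.natDegree ≤ n →
    ∃ c : ℕ → ℝ, p = ∑ m ∈ Finset.range (n+1), c m • leg m := by
  intro n
  induction n with
  | zero =>
    intro p hp
    refine ⟨fun _ => p.coeff 0, ?_⟩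
    rw [Finset.sum_range_one]
    have hleg0 : leg 0 = 1 := by
      simp [leg]
    rw [hleg0, smul_eq_C_mul, mul_one]
    exact Polynomial.eq_C_of_natDegree_le_zero hp
  | succ n ih =>
    intro p hp
    set d : ℝ := p.coeff (n+1) / (leg (n+1)).coeff (n+1) with hd
    have hqd : (p - Polynomial.C d * leg (n+1)).natDegree ≤ n := by
      rw [Polynomial.natDegree_le_iff_coeff_eq_zero]
      intro N hN
      rcases Nat.eq_or_lt_of_le hN with hEq | hlt
      · rw [Polynomial.coeff_sub, Polynomial.coeff_C_mul, ← hEq, hd,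
          div_mul_cancel₀ _ (leg_coeff_ne (n+1)), sub_self]
      · rw [Polynomial.coeff_sub, Polynomial.coeff_C_mul,
          Polynomial.coeff_eq_zero_of_natDegree_lt (by omega),
          Polynomial.coeff_eq_zero_of_natDegree_lt (by rw [leg_natDegree]; omega)]
        ring
    obtain ⟨c, hc⟩ := ih _ hqd
    classical
    refine ⟨Function.update c (n+1) d, ?_⟩
    rw [Finset.sum_range_succ, Function.update_self]
    rw [Finset.sum_congr rfl (fun m hm => by
      rw [Function.update_of_ne (by simp only [Finset.mem_range] at hm; omega)])]
    rw [← hc, smul_eq_C_mul]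
    ring

lemma coeff_zero_of_orth {kk : ℕ} {c : ℕ → ℝ} {p : Polynomial ℝ}
    (hp : p = ∑ m ∈ Finset.range (kk+1), c m • leg m)
    {r : ℕ} (horth : Orth r p) : ∀ j, j + 1 ≤ r → j ≤ kk → c j = 0 := by
  intro j hj hjk
  have h := horth (leg j) (by rw [leg_natDegree]; omega)
  rw [hp] at h
  have hrw : ∀ s : ℝ, (∑ m ∈ Finset.range (kk+1), c m • leg m).eval s * (leg j).eval s
      = ∑ m ∈ Finset.range (kk+1), c m * ((leg m).eval s * (leg j).eval s) := by
    intro s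
    rw [Polynomial.eval_finset_sum, Finset.sum_mul]
    refine Finset.sum_congr rfl fun m _ => ?_
    rw [Polynomial.eval_smul, smul_eq_mul]
    ring
  rw [intervalIntegral.integral_congr (fun s _ => hrw s),
    intervalIntegral.integral_finset_sum (fun m _ => (pii (leg m) (leg j) _ _).const_mul _)] at h
  simp only [intervalIntegral.integral_const_mul] at h
  rw [Finset.sum_eq_single j (fun m _ hne => by rw [leg_leg_orth hne, mul_zero])
    (fun hj' => absurd (Finset.mem_range.mpr (by omega)) hj')] at h
  exact (mul_eq_zero.mp h).resolve_right (ne_of_gt (leg_sq_pos j))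

lemma telescope (c : ℕ → ℝ) (K : ℕ) :
    ∀ d r, r + d = K →
      ∑ m ∈ Finset.Icc (r+1) K, (∑ j ∈ Finset.Icc m K, c j) • (leg m - leg (m-1)) =
      (∑ m ∈ Finset.Icc r K, c m • leg m) - (∑ j ∈ Finset.Icc r K, c j) • leg r := by
  intro d
  induction d with
  | zero =>
    intro r hr
    have hrK : r = K := by omega
    subst hrK
    rw [Finset.Icc_eq_empty (by omega), Finset.Icc_self]
    simp
  | succ d ih =>
    intro r hr
    have h1 : Finset.Icc r K = insert r (Finset.Icc (r+1) K) := by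
      ext x
      simp only [Finset.mem_Icc, Finset.mem_insert]
      omega
    have h2 : Finset.Icc (r+1) K = insert (r+1) (Finset.Icc (r+1+1) K) := by
      ext x
      simp only [Finset.mem_Icc, Finset.mem_insert]
      omega
    have hni : r ∉ Finset.Icc (r+1) K := by simp
    have hni2 : r + 1 ∉ Finset.Icc (r+1+1) K := by simp
    have hih := ih (r+1) (by omega)
    calc ∑ m ∈ Finset.Icc (r+1) K, (∑ j ∈ Finset.Icc m K, c j) • (leg m - leg (m-1))
        = (∑ j ∈ Finset.Icc (r+1) K, c j) • (leg (r+1) - leg r)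
          + ∑ m ∈ Finset.Icc (r+1+1) K, (∑ j ∈ Finset.Icc m K, c j) • (leg m - leg (m-1)) := by
          conv_lhs => rw [h2]
          rw [Finset.sum_insert hni2]
          simp
      _ = (∑ j ∈ Finset.Icc (r+1) K, c j) • (leg (r+1) - leg r)
          + ((∑ m ∈ Finset.Icc (r+1) K, c m • leg m)
            - (∑ j ∈ Finset.Icc (r+1) K, c j) • leg (r+1)) := by
          rw [hih]
      _ = (∑ m ∈ Finset.Icc r K, c m • leg m) - (∑ j ∈ Finset.Icc r K, c j) • leg r := by
          conv_rhs => rw [h1]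
          rw [Finset.sum_insert hni, Finset.sum_insert hni]
          module

/-! ### Main theorem -/

/-- Structure of the correction functions `F_{2,i} = (P⁻D⁻¹P⁺D⁻¹)^{i-1} P⁻D⁻¹ L_k`. -/
theorem F2i_representation (k : ℕ) (hk : 2 ≤ k) (F G : ℕ → Polynomial ℝ)
    (hF1 : IsRadauNeg k (Dinv fun t => (leg k).eval t) (F 1))
    (hG : ∀ i, IsRadauPos k (Dinv fun t => (F i).eval t) (G i))
    (hFsucc : ∀ i, IsRadauNeg k (Dinv fun t => (G i).eval t) (F (i + 1))) :
    ∀ i, 1 ≤ i → i ≤ (k + 1) / 2 →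
      (∃ b : ℕ → ℝ, F i = ∑ m ∈ Finset.Icc (k + 2 - 2 * i) k, b m • (leg m - leg (m - 1))) ∧
      (F i).eval 1 = 0 := by
  have hOk : Orth k (leg k) := fun w hw => leg_orth k w (by omega)
  have hinv : ∀ i, 1 ≤ i → 2*i ≤ k+1 →
      (F i).natDegree ≤ k ∧ Orth (k+1-2*i) (F i) ∧ (F i).eval 1 = 0 := by
    intro i
    induction i with
    | zero => omega
    | succ i ih =>
      intro _ h2
      rcases Nat.eq_zero_or_pos i with hi0 | hi0
      · subst hi0
        obtain ⟨hd, ho, he⟩ := radauNeg_poly hF1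
        have horth1 : Orth (k - 1) (dint (leg k)) := orth_dint (by omega) hOk
        have hOF : Orth (min (k-1) k) (F 1) := radau_orth horth1 ho
        refine ⟨hd, ?_, ?_⟩
        · exact orth_mono (by omega) hOF
        · rw [he, dint_eval_one (by omega) hOk]
      · obtain ⟨hdF, hoF, heF⟩ := ih (by omega) (by omega)
        set c := k + 1 - 2*i with hc
        have hc2 : 2 ≤ c := by omega
        have ho1 : Orth (c - 1) (dint (F i)) := orth_dint (by omega) hoF
        obtain ⟨hdG, hoG'⟩ := radauPos_poly (hG i)
        have hoG : Orth (c - 1) (G i) :=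
          orth_mono (le_min le_rfl (by omega)) (radau_orth ho1 hoG')
        have ho2 : Orth (c - 2) (dint (G i)) := by
          have := orth_dint (p := G i) (c := c - 1) (by omega) hoG
          exact orth_mono (by omega) this
        obtain ⟨hdF', hoF'', heF''⟩ := radauNeg_poly (hFsucc i)
        refine ⟨hdF', ?_, ?_⟩
        · have hOF : Orth (min (c-2) k) (F (i+1)) := radau_orth ho2 hoF''
          exact orth_mono (by omega) hOF
        · rw [heF'', dint_eval_one (by omega) hoG]
  intro i h1 h2
  have h2' : 2*i ≤ k+1 := by
    have := (Nat.le_div_iff_mul_le (by norm_num : 0 < 2)).mp h2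
    omega
  obtain ⟨hdeg, horth, hev⟩ := hinv i h1 h2'
  refine ⟨?_, hev⟩
  obtain ⟨c, hc⟩ := leg_span k (F i) hdeg
  set r := k + 1 - 2*i with hr
  have hc0 : ∀ j, j < r → c j = 0 := fun j hj =>
    coeff_zero_of_orth hc horth j (by omega) (by omega)
  have hsub : Finset.Icc r k ⊆ Finset.range (k+1) := by
    intro x hx
    simp only [Finset.mem_Icc] at hx
    simp only [Finset.mem_range]
    omega
  have hcIcc : F i = ∑ m ∈ Finset.Icc r k, c m • leg m := by
    rw [hc]
    refine (Finset.sum_subset hsub ?_).symm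
    intro x hx hnx
    simp only [Finset.mem_range] at hx
    simp only [Finset.mem_Icc, not_and, not_le] at hnx
    rw [hc0 x (by omega), zero_smul]
  have hsum0 : ∑ m ∈ Finset.Icc r k, c m = 0 := by
    have h := hev
    rw [hcIcc, Polynomial.eval_finset_sum] at h
    simpa [Polynomial.eval_smul, leg_eval_one] using h
  have htel := telescope c k (k - r) r (by omega)
  refine ⟨fun m => ∑ j ∈ Finset.Icc m k, c j, ?_⟩
  rw [show k + 2 - 2*i = r + 1 by omega, htel, hsum0, zero_smul, sub_zero, ← hcIcc]
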